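/- arXiv:0901.3441 — 3 statements merged into one kernel-verified Lean document; each statement's English description precedes it below -/
import Mathlib

section
/- If G is a finite QSI group and N is a normal subgroup of G, then the quotient group G/N is also QSI. -/
open scoped BigOperators Classical

noncomputable section

/-- `χ` is the character of some finite-dimensional complex representation of `G`. -/
def IsCharacter (G : Type) [Monoid G] (χ : G → ℂ) : Prop :=
  ∃ V : FDRep ℂ G, χ = V.character

/-- `χ` is an irreducible complex character of `G`, i.e. the character of a simple
finite-dimensional complex representation of `G`. -/
def IsIrreducibleCharacter (G : Type) [Monoid G] (χ : G → ℂ) : Prop :=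
  ∃ V : FDRep ℂ G, CategoryTheory.Simple V ∧ χ = V.character

/-- The class function of `G` induced from the function `φ` on the subgroup `U`:
`φ^G(g) = |U|⁻¹ · ∑_{y ∈ G, y⁻¹gy ∈ U} φ(y⁻¹gy)`. -/
def inducedChar {G : Type} [Group G] [Finite G] (U : Subgroup G) (φ : ↥U → ℂ) : G → ℂ :=
  fun g => (Nat.card ↥U : ℂ)⁻¹ *
    ∑ᶠ y : G, if h : y⁻¹ * g * y ∈ U then φ ⟨y⁻¹ * g * y, h⟩ else 0

/-- `χ` is quasi solvably induced (QSI) from the subgroup `U` and `φ ∈ Irr(U)`: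
there is `k ≥ 1` with `k·χ = φ^G`, and `U/ker(φ)` is solvable, where
`ker(φ) = {u ∈ U | φ(u) = φ(1)}`. -/
def IsQSIFrom {G : Type} [Group G] [Finite G] (χ : G → ℂ) (U : Subgroup G)
    (φ : ↥U → ℂ) : Prop :=
  IsIrreducibleCharacter ↥U φ ∧
  (∃ k : ℕ, 0 < k ∧ ∀ g : G, (k : ℂ) * χ g = inducedChar U φ g) ∧
  ∃ (K : Subgroup ↥U) (hK : K.Normal), (K : Set ↥U) = {u : ↥U | φ u = φ 1} ∧
    (letI := hK; IsSolvable (↥U ⧸ K))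

/-- `χ` is QSI from some subgroup `U ≤ G` and some `φ ∈ Irr(U)`. -/
def IsQSI {G : Type} [Group G] [Finite G] (χ : G → ℂ) : Prop :=
  ∃ (U : Subgroup G) (φ : ↥U → ℂ), IsQSIFrom χ U φ

/-- A finite group `G` is QSI if every irreducible complex character of `G` is QSI. -/
def IsQSIGroup (G : Type) [Group G] [Finite G] : Prop :=
  ∀ χ : G → ℂ, IsIrreducibleCharacter G χ → IsQSI χ

/-- The usual inner product of class functions on a finite group. -/
def charInner {H : Type} [Group H] [Finite H] (α β : H → ℂ) : ℂ :=
  (Nat.card H : ℂ)⁻¹ * ∑ᶠ h : H, α h * starRingEnd ℂ (β h)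

namespace QSIAux

open CategoryTheory FDRep

variable {k : Type} [Field k]

section MonoidPart

variable {G H : Type} [Monoid G] [Monoid H]

/-- The subrepresentation on an invariant submodule. -/
def subrep (V : FDRep k G) (p : Submodule k V)
    (hp : ∀ (g : G) (v : V), v ∈ p → V.ρ g v ∈ p) : FDRep k G :=
  FDRep.of
    { toFun := fun g => (V.ρ g).restrict (fun v hv => hp g v hv)
      map_one' := by
        ext v
        simp [LinearMap.restrict_apply]
      map_mul' := fun g h => by
        ext v
        simp [LinearMap.restrict_apply] }

/-- The inclusion of a subrepresentation. -/
def subrepι (V : FDRep k G) (p : Submodule k V)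
    (hp : ∀ (g : G) (v : V), v ∈ p → V.ρ g v ∈ p) : subrep V p hp ⟶ V where
  hom := FGModuleCat.ofHom p.subtype
  comm := fun g => by
    ext v
    rfl

@[simp] lemma subrepι_hom_apply (V : FDRep k G) (p : Submodule k V)
    (hp : ∀ (g : G) (v : V), v ∈ p → V.ρ g v ∈ p) (x : p) :
    (subrepι V p hp).hom x = x.1 := rfl

lemma hom_congr {Y V : FDRep k G} {g h : Y ⟶ V} (H : g = h) (x : Y) :
    g.hom x = h.hom x := by rw [H]

lemma comm_apply {Y V : FDRep k G} (f : Y ⟶ V) (g : G) (y : Y) :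
    f.hom (Y.ρ g y) = V.ρ g (f.hom y) := by
  have := f.comm g
  exact congrArg (fun q => q y) this

lemma hom_eq_zero_iff {Y V : FDRep k G} (f : Y ⟶ V) : f = 0 ↔ f.hom = 0 := by
  constructor
  · rintro rfl; exact Action.zero_hom
  · intro h; ext : 1; rw [h]; exact Action.zero_hom.symm

lemma mono_of_injective {Y V : FDRep k G} (f : Y ⟶ V)
    (hf : Function.Injective f.hom) : Mono f := by
  constructor
  intro Z g h hgh
  ext z
  exact hf (hom_congr hgh z)

lemma injective_of_mono {Y V : FDRep k G} (f : Y ⟶ V) [Mono f] :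
    Function.Injective f.hom := by
  have hker : ∀ (g : G) (v : Y), v ∈ LinearMap.ker f.hom.hom.hom → Y.ρ g v ∈ LinearMap.ker f.hom.hom.hom := by
    intro g v hv
    rw [LinearMap.mem_ker] at hv ⊢
    exact (comm_apply f g v).trans (((V.ρ g).congr_arg hv).trans (map_zero _))
  let κ := subrepι Y _ hker
  have hκ : κ ≫ f = 0 := by
    ext z
    change f.hom z.1 = 0
    exact z.2
  have hκ0 : κ = 0 := by
    have : κ ≫ f = 0 ≫ f := by rw [hκ, Limits.zero_comp]
    exact (cancel_mono f).mp this
  show Function.Injective f.hom.hom.hom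
  rw [← LinearMap.ker_eq_bot]
  ext v
  simp only [Submodule.mem_bot, LinearMap.mem_ker]
  constructor
  · intro hv
    have := hom_congr hκ0 (⟨v, hv⟩ : LinearMap.ker f.hom.hom.hom)
    rw [Action.zero_hom] at this
    exact this
  · intro hv; rw [hv, map_zero]

lemma isIso_of_bijective {Y V : FDRep k G} (f : Y ⟶ V)
    (hf : Function.Bijective f.hom) : IsIso f := by
  let e : Y ≃ₗ[k] V := LinearEquiv.ofBijective f.hom.hom.hom hf
  let i : Y ≅ V := Action.mkIso
    e.toFGModuleCatIso f.comm
  have : f = i.hom := by ext x; rfl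
  rw [this]
  infer_instance

lemma bijective_of_isIso {Y V : FDRep k G} (f : Y ⟶ V) [IsIso f] :
    Function.Bijective f.hom := by
  have h1 : f ≫ inv f = 𝟙 Y := IsIso.hom_inv_id f
  have h2 : inv f ≫ f = 𝟙 V := IsIso.inv_hom_id f
  constructor
  · intro a b hab
    have ha := hom_congr h1 a
    have hb := hom_congr h1 b
    change (inv f).hom (f.hom a) = a at ha
    change (inv f).hom (f.hom b) = b at hb
    rw [← ha, ← hb, hab]
  · intro v
    refine ⟨(inv f).hom v, ?_⟩
    exact hom_congr h2 v

end MonoidPart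

end QSIAux

namespace QSIAux

open CategoryTheory FDRep

variable {k : Type} [Field k]

section Pull

variable {G H : Type} [Monoid G] [Monoid H]

/-- Pullback of a representation along a monoid homomorphism. -/
def pull (f : G →* H) (X : FDRep k H) : FDRep k G :=
  FDRep.of (X.ρ.comp f)

lemma pull_ρ (f : G →* H) (X : FDRep k H) (g : G) :
    (pull f X).ρ g = X.ρ (f g) := rfl

lemma pull_character (f : G →* H) (X : FDRep k H) (g : G) :
    (pull f X).character g = X.character (f g) := rfl

/-- Pullback of a morphism of representations. -/
def pullMap (f : G →* H) {X Y : FDRep k H} (φ : X ⟶ Y) : pull f X ⟶ pull f Y where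
  hom := φ.hom
  comm := fun g => φ.comm (f g)

lemma pullMap_hom (f : G →* H) {X Y : FDRep k H} (φ : X ⟶ Y) :
    (pullMap f φ).hom = φ.hom := rfl

theorem simple_pull_iff (f : G →* H) (hf : Function.Surjective f) (X : FDRep k H) :
    Simple (pull f X) ↔ Simple X := by
  constructor
  · intro hX
    constructor
    intro Y φ hφ
    have hinj : Function.Injective φ.hom := injective_of_mono φ
    let ψ : pull f Y ⟶ pull f X := pullMap f φ
    have hψm : Mono ψ := mono_of_injective ψ hinj
    have hiff : IsIso ψ ↔ ψ ≠ 0 := Simple.mono_isIso_iff_nonzero ψ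
    constructor
    · intro hIso h0
      have hψ0 : ψ = 0 := by
        rw [hom_eq_zero_iff] at h0 ⊢
        exact h0
      have : IsIso ψ := by
        have hb : Function.Bijective φ.hom := bijective_of_isIso φ
        exact isIso_of_bijective ψ hb
      exact (hiff.mp this) hψ0
    · intro hne
      have hψne : ψ ≠ 0 := by
        intro h0
        apply hne
        rw [hom_eq_zero_iff] at h0 ⊢
        exact h0
      have : IsIso ψ := hiff.mpr hψne
      have hb : Function.Bijective ψ.hom := bijective_of_isIso ψ
      exact isIso_of_bijective φ hb
  · intro hX
    constructor
    intro Y φ hφ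
    have hinj : Function.Injective φ.hom := injective_of_mono φ
    have hR : ∀ (h : H) (v : X), v ∈ LinearMap.range φ.hom.hom.hom → X.ρ h v ∈ LinearMap.range φ.hom.hom.hom := by
      intro h v hv
      obtain ⟨g, rfl⟩ := hf h
      obtain ⟨y, rfl⟩ := hv
      exact ⟨Y.ρ g y, comm_apply φ g y⟩
    let ι := subrepι X _ hR
    have hιm : Mono ι := mono_of_injective ι (fun a b hab => Subtype.ext hab)
    have hiff : IsIso ι ↔ ι ≠ 0 := Simple.mono_isIso_iff_nonzero ι
    constructor
    · intro hIso h0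
      -- φ is both an isomorphism and zero, so X is trivial, contradicting simplicity
      have hsurj : Function.Surjective φ.hom := (bijective_of_isIso φ).2
      have h0' : φ.hom = 0 := (hom_eq_zero_iff φ).mp h0
      have hsub : ∀ v : X, v = 0 := by
        intro v
        obtain ⟨y, hy⟩ := hsurj v
        rw [h0'] at hy
        exact hy.symm
      apply id_nonzero X
      ext v
      rw [Action.zero_hom]
      exact hsub v
    · intro hne
      have hR0 : LinearMap.range φ.hom.hom.hom ≠ ⊥ := by
        intro hbot
        apply hne
        rw [hom_eq_zero_iff]
        exact FGModuleCat.hom_ext (LinearMap.range_eq_bot.mp hbot)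
      have hιne : ι ≠ 0 := by
        intro h0
        apply hR0
        have h0' : ι.hom = 0 := (hom_eq_zero_iff ι).mp h0
        rw [eq_bot_iff]
        intro v hv
        have := congrArg (fun q : (subrep X _ hR).V ⟶ X.V => q.hom.hom (⟨v, hv⟩ : LinearMap.range φ.hom.hom.hom)) h0'
        exact (Submodule.mem_bot k).mpr this
      have hIso : IsIso ι := hiff.mpr hιne
      have hb : Function.Bijective ι.hom := bijective_of_isIso ι
      have htop : LinearMap.range φ.hom.hom.hom = ⊤ := by
        rw [eq_top_iff]
        intro v _
        obtain ⟨⟨w, hw⟩, hww⟩ := hb.2 v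
        exact hww ▸ hw
      have hbφ : Function.Bijective φ.hom :=
        ⟨hinj, LinearMap.range_eq_top.mp htop⟩
      exact isIso_of_bijective φ hbφ

end Pull

end QSIAux

namespace QSIAux

open CategoryTheory FDRep

section GroupPart

/-- A simple representation has positive dimension. -/
lemma finrank_pos_of_simple {G : Type} [Monoid G] (X : FDRep ℂ G) [Simple X] :
    0 < Module.finrank ℂ X := by
  by_contra h
  push_neg at h
  have h0 : Module.finrank ℂ X = 0 := Nat.le_zero.mp h
  have : Subsingleton X := (Module.finrank_zero_iff (R := ℂ) (M := X)).mp h0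
  apply id_nonzero X
  ext v
  rw [Action.zero_hom]
  exact (Subsingleton.elim (α := X) _ _ : _)

/-- The sum of character values equals `|G|` times the dimension of the invariants. -/
lemma sum_character {A : Type} [Group A] [Fintype A] (X : FDRep ℂ A) :
    ∑ a : A, X.character a =
      (Fintype.card A : ℂ) * (Module.finrank ℂ (Representation.invariants X.ρ) : ℂ) := by
  have hc : (Fintype.card A : ℂ) ≠ 0 := Nat.cast_ne_zero.mpr Fintype.card_ne_zero
  letI : Invertible (Fintype.card A : ℂ) := invertibleOfNonzero hc
  have h := FDRep.average_char_eq_finrank_invariants X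
  have h2 : (Fintype.card A : ℂ) * (⅟(Fintype.card A : ℂ) • ∑ g : A, X.character g)
      = (Fintype.card A : ℂ) * (Module.finrank ℂ (Representation.invariants X.ρ) : ℂ) := by
    rw [invOf_eq_inv, smul_eq_mul, Fintype.card_eq_nat_card, h]
  rw [smul_eq_mul, ← mul_assoc, mul_invOf_self, one_mul] at h2
  exact h2

/-- Summing a function on the quotient over the group counts each value `|N|` times. -/
lemma sum_quotient_fiber {G : Type} [Group G] [Fintype G] (N : Subgroup G) [N.Normal]
    (f : G ⧸ N → ℂ) :
    ∑ y : G, f (y : G ⧸ N) = (Nat.card N : ℂ) * ∑ q : G ⧸ N, f q := by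
  classical
  rw [← Finset.sum_fiberwise' Finset.univ (fun y : G => (y : G ⧸ N)) f]
  rw [Finset.mul_sum]
  refine Finset.sum_congr rfl fun q _ => ?_
  rw [Finset.sum_const]
  have hcard : ({y ∈ Finset.univ | (y : G ⧸ N) = q} : Finset G).card = Nat.card N := by
    obtain ⟨y₀, rfl⟩ := QuotientGroup.mk_surjective q
    have e : {y : G // (y : G ⧸ N) = (y₀ : G ⧸ N)} ≃ N :=
      { toFun := fun x => ⟨y₀⁻¹ * x.1, by
          have := x.2
          rw [eq_comm, QuotientGroup.eq] at this
          exact this⟩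
        invFun := fun n => ⟨y₀ * n.1, by
          rw [eq_comm, QuotientGroup.eq]
          simpa using n.2⟩
        left_inv := fun x => by
          ext
          simp
        right_inv := fun n => by
          ext
          simp }
    rw [← Fintype.card_subtype, Nat.card_eq_fintype_card]
    exact Fintype.card_congr e
  rw [hcard, nsmul_eq_mul]

end GroupPart

end QSIAux
lemma inducedChar_eq_sum {G : Type} [Group G] [Finite G] [Fintype G] (U : Subgroup G)
    (φ : ↥U → ℂ) (g : G) :
    inducedChar U φ g = (Nat.card ↥U : ℂ)⁻¹ *
      ∑ y : G, if h : y⁻¹ * g * y ∈ U then φ ⟨y⁻¹ * g * y, h⟩ else 0 := by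
  rw [inducedChar, finsum_eq_sum_of_fintype]

/-- If `G` is a finite QSI group and `N ⊴ G`, then `G/N` is QSI. -/
theorem isQSIGroup_quotient (G : Type) [Group G] [Finite G]
    (N : Subgroup G) [N.Normal] (hG : IsQSIGroup G) :
    IsQSIGroup (G ⧸ N) := by
  classical
  letI : Fintype G := Fintype.ofFinite G
  intro χq hχq
  obtain ⟨Vq, hVqsimp, rfl⟩ := hχq
  haveI := hVqsimp
  set π : G →* G ⧸ N := QuotientGroup.mk' N with hπdef
  have hπ : Function.Surjective π := QuotientGroup.mk'_surjective N
  have hVsimp : CategoryTheory.Simple (QSIAux.pull π Vq) :=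
    (QSIAux.simple_pull_iff π hπ Vq).mpr hVqsimp
  obtain ⟨U, φ, hφirr, ⟨k, hk, hInd⟩, K, hKnorm, hKset, hKsolv⟩ :=
    hG (QSIAux.pull π Vq).character ⟨QSIAux.pull π Vq, hVsimp, rfl⟩
  obtain ⟨W, hWsimp, hφW⟩ := hφirr
  haveI := hWsimp
  -- basic facts
  have hUne : (Nat.card ↥U : ℂ) ≠ 0 := Nat.cast_ne_zero.mpr Nat.card_pos.ne'
  have hGne : (Fintype.card G : ℂ) ≠ 0 := Nat.cast_ne_zero.mpr Fintype.card_ne_zero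
  have hNne : (Nat.card ↥N : ℂ) ≠ 0 := Nat.cast_ne_zero.mpr Nat.card_pos.ne'
  have hd : 0 < Module.finrank ℂ W := QSIAux.finrank_pos_of_simple W
  have hφ1 : φ 1 = (Module.finrank ℂ W : ℂ) := by rw [hφW]; exact FDRep.char_one W
  -- Step B : value of the induction formula at 1
  have hB : (k : ℂ) * Vq.character 1 =
      (Nat.card ↥U : ℂ)⁻¹ * ((Fintype.card G : ℂ) * φ 1) := by
    have h1 := hInd 1
    rw [inducedChar_eq_sum] at h1
    have hterm : ∀ y : G,
        (if h : y⁻¹ * 1 * y ∈ U then φ ⟨y⁻¹ * 1 * y, h⟩ else 0) = φ 1 := by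
      intro y
      have hy : y⁻¹ * 1 * y = 1 := by group
      simp only [hy]
      rw [dif_pos (one_mem U)]
      exact congrArg φ (Subtype.ext rfl)
    rw [Finset.sum_congr rfl (fun y _ => hterm y), Finset.sum_const, Finset.card_univ,
      nsmul_eq_mul] at h1
    have hchar1 : (QSIAux.pull π Vq).character 1 = Vq.character 1 := by
      rw [QSIAux.pull_character, map_one]
    rw [hchar1] at h1
    exact h1
  -- Step C : summing the induction formula over N
  set S : ℂ := ∑ n : ↥N, (if h : (n : G) ∈ U then φ ⟨(n : G), h⟩ else 0) with hSdef
  have hS : S = (Nat.card ↥N : ℂ) * φ 1 := by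
    have hsum : ∑ n : ↥N, (k : ℂ) * (QSIAux.pull π Vq).character (n : G)
        = ∑ n : ↥N, inducedChar U φ (n : G) :=
      Finset.sum_congr rfl (fun n _ => hInd (n : G))
    have hLHS : ∑ n : ↥N, (k : ℂ) * (QSIAux.pull π Vq).character (n : G)
        = (Nat.card ↥N : ℂ) * ((k : ℂ) * Vq.character 1) := by
      have : ∀ n : ↥N, (QSIAux.pull π Vq).character (n : G) = Vq.character 1 := by
        intro n
        rw [QSIAux.pull_character]
        congr 1
        exact (QuotientGroup.eq_one_iff (n : G)).mpr n.2
      rw [Finset.sum_congr rfl (fun n _ => by rw [this n]), Finset.sum_const,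
        Finset.card_univ, nsmul_eq_mul, Nat.card_eq_fintype_card]
    have hRHS : ∑ n : ↥N, inducedChar U φ (n : G)
        = (Nat.card ↥U : ℂ)⁻¹ * ((Fintype.card G : ℂ) * S) := by
      have h1 : ∀ n : ↥N, inducedChar U φ (n : G) = (Nat.card ↥U : ℂ)⁻¹ *
          ∑ y : G, (if h : y⁻¹ * (n : G) * y ∈ U then φ ⟨y⁻¹ * (n : G) * y, h⟩ else 0) :=
        fun n => inducedChar_eq_sum U φ (n : G)
      rw [Finset.sum_congr rfl (fun n _ => h1 n), ← Finset.mul_sum]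
      congr 1
      rw [Finset.sum_comm]
      have hinner : ∀ y : G,
          (∑ n : ↥N, if h : y⁻¹ * (n : G) * y ∈ U then φ ⟨y⁻¹ * (n : G) * y, h⟩ else 0) = S := by
        intro y
        have hmem : ∀ n : ↥N, y⁻¹ * (n : G) * y ∈ N := by
          intro n
          have := (inferInstance : N.Normal).conj_mem (n : G) n.2 y⁻¹
          simpa [mul_assoc] using this
        have hmem' : ∀ n : ↥N, y * (n : G) * y⁻¹ ∈ N := by
          intro n
          exact (inferInstance : N.Normal).conj_mem (n : G) n.2 y
        let ey : ↥N ≃ ↥N :=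
          { toFun := fun n => ⟨y⁻¹ * (n : G) * y, hmem n⟩
            invFun := fun n => ⟨y * (n : G) * y⁻¹, hmem' n⟩
            left_inv := fun n => by ext; simp [mul_assoc]
            right_inv := fun n => by ext; simp [mul_assoc] }
        rw [hSdef]
        exact Fintype.sum_equiv ey _ _ (fun n => rfl)
      rw [Finset.sum_congr rfl (fun y _ => hinner y), Finset.sum_const, Finset.card_univ,
        nsmul_eq_mul]
    rw [hLHS, hRHS, hB] at hsum
    have h2 : (Fintype.card G : ℂ) * S = (Fintype.card G : ℂ) * ((Nat.card ↥N : ℂ) * φ 1) := by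
      apply mul_left_cancel₀ (inv_ne_zero hUne)
      rw [← hsum]
      ring
    exact mul_left_cancel₀ hGne h2
  -- Step D : identify S with an invariant dimension
  set M : Subgroup ↥U := N.subgroupOf U with hMdef
  set resW := QSIAux.pull M.subtype W with hresWdef
  set r := Module.finrank ℂ (Representation.invariants resW.ρ) with hrdef
  have hMsum : S = (Nat.card ↥M : ℂ) * (r : ℂ) := by
    have step1 : S = ∑ x : ↥M, φ (x : ↥U) := by
      rw [hSdef]
      rw [← Finset.sum_filter_of_ne
        (p := fun n : ↥N => (n : G) ∈ U) (s := Finset.univ)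
        (f := fun n : ↥N => if h : (n : G) ∈ U then φ ⟨(n : G), h⟩ else 0)
        (by intro n _ hne; by_contra hc; exact hne (dif_neg hc))]
      refine Finset.sum_bij
        (fun (n : ↥N) (hn : n ∈ Finset.univ.filter (fun n : ↥N => (n : G) ∈ U)) =>
          (⟨⟨(n : G), (Finset.mem_filter.mp hn).2⟩,
            Subgroup.mem_subgroupOf.mpr n.2⟩ : ↥M))
        (fun n hn => Finset.mem_univ _) ?_ ?_ ?_
      · intro a ha b hb hab
        ext
        exact congrArg (fun x : ↥M => ((x : ↥U) : G)) hab
      · intro x _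
        refine ⟨⟨((x : ↥U) : G), Subgroup.mem_subgroupOf.mp x.2⟩, ?_, ?_⟩
        · exact Finset.mem_filter.mpr ⟨Finset.mem_univ _, (x : ↥U).2⟩
        · ext
          rfl
      · intro n hn
        rw [dif_pos (Finset.mem_filter.mp hn).2]
    have step2 : ∑ x : ↥M, φ (x : ↥U) = ∑ x : ↥M, resW.character x := by
      refine Finset.sum_congr rfl (fun x _ => ?_)
      rw [hresWdef, QSIAux.pull_character, hφW]
      rfl
    rw [step1, step2, QSIAux.sum_character resW, Nat.card_eq_fintype_card, hrdef]
  -- Step E : arithmetic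
  have hj : Function.Injective (fun x : ↥M => (⟨((x : ↥U) : G), Subgroup.mem_subgroupOf.mp x.2⟩ : ↥N)) := by
    intro a b hab
    ext
    exact congrArg (fun n : ↥N => (n : G)) hab
  have hMN_le : Nat.card ↥M ≤ Nat.card ↥N := Nat.card_le_card_of_injective _ hj
  have hr_le : r ≤ Module.finrank ℂ W := by
    rw [hrdef]
    exact Submodule.finrank_le _
  have hMpos : 0 < Nat.card ↥M := Nat.card_pos
  have hcast : Nat.card ↥N * Module.finrank ℂ W = Nat.card ↥M * r := by
    have : ((Nat.card ↥N * Module.finrank ℂ W : ℕ) : ℂ) = ((Nat.card ↥M * r : ℕ) : ℂ) := by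
      push_cast
      rw [← hφ1, ← hS, hMsum]
    exact_mod_cast this
  have heq1 : Nat.card ↥M * r = Nat.card ↥M * Module.finrank ℂ W :=
    le_antisymm (Nat.mul_le_mul_left _ hr_le)
      (by rw [← hcast]; exact Nat.mul_le_mul_right _ hMN_le)
  have hr_eq : r = Module.finrank ℂ W := Nat.eq_of_mul_eq_mul_left hMpos heq1
  have hMN : Nat.card ↥M = Nat.card ↥N := by
    have h2 : Nat.card ↥N * Module.finrank ℂ W = Nat.card ↥M * Module.finrank ℂ W := by
      rw [hcast, hr_eq]
    exact (Nat.eq_of_mul_eq_mul_right hd h2).symm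
  -- Step F : N ≤ U
  have hNU : N ≤ U := by
    intro n hn
    have hbij : Function.Bijective
        (fun x : ↥M => (⟨((x : ↥U) : G), Subgroup.mem_subgroupOf.mp x.2⟩ : ↥N)) :=
      (Nat.bijective_iff_injective_and_card _).mpr ⟨hj, hMN⟩
    obtain ⟨x, hx⟩ := hbij.2 ⟨n, hn⟩
    have hxn : ((x : ↥U) : G) = n := congrArg (fun m : ↥N => (m : G)) hx
    exact hxn ▸ (x : ↥U).2
  -- Step G : W.ρ is trivial on N ∩ U
  have hinv_top : Representation.invariants resW.ρ = ⊤ :=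
    Submodule.eq_top_of_finrank_eq hr_eq
  have hNker : ∀ u : ↥U, (u : G) ∈ N → W.ρ u = 1 := by
    intro u hu
    apply LinearMap.ext
    intro (v : W)
    have hv : v ∈ Representation.invariants resW.ρ := by
      rw [hinv_top]; trivial
    have := (Representation.mem_invariants resW.ρ v).mp hv ⟨u, Subgroup.mem_subgroupOf.mpr hu⟩
    exact this
  -- Step H : the quotient-side data
  set Uq : Subgroup (G ⧸ N) := U.map π with hUqdef
  set p : ↥U →* ↥Uq := π.subgroupMap U with hpdef
  have hpcoe : ∀ u : ↥U, ((p u : ↥Uq) : G ⧸ N) = π (u : G) := fun u => rfl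
  have hpsurj : Function.Surjective p := MonoidHom.subgroupMap_surjective π U
  have hker : p.ker = M := by
    ext u
    rw [MonoidHom.mem_ker, hMdef, Subgroup.mem_subgroupOf]
    rw [Subtype.ext_iff]
    change π (u : G) = 1 ↔ _
    exact QuotientGroup.eq_one_iff (u : G)
  set e := QuotientGroup.quotientKerEquivOfSurjective p hpsurj with hedef
  have hlift : ∀ x ∈ p.ker, Representation.asGroupHom W.ρ x = 1 := by
    intro x hx
    apply Units.ext
    rw [Representation.asGroupHom_apply]
    rw [hker, hMdef, Subgroup.mem_subgroupOf] at hx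
    rw [hNker x hx]
    rfl
  set L := QuotientGroup.lift p.ker (Representation.asGroupHom W.ρ) hlift with hLdef
  set ρq : Representation ℂ ↥Uq W := (Units.coeHom _).comp (L.comp e.symm.toMonoidHom)
    with hρqdef
  have hρq : ∀ u : ↥U, ρq (p u) = W.ρ u := by
    intro u
    have he : e.symm (p u) = QuotientGroup.mk u := by
      apply e.injective
      rw [MulEquiv.apply_symm_apply]
      rfl
    show (Units.coeHom _) (L (e.symm (p u))) = W.ρ u
    rw [he]
    show ((Representation.asGroupHom W.ρ u : (W →ₗ[ℂ] W)ˣ) : W →ₗ[ℂ] W) = W.ρ u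
    exact Representation.asGroupHom_apply W.ρ u
  set Wq : FDRep ℂ ↥Uq := FDRep.of ρq with hWqdef
  set φq : ↥Uq → ℂ := Wq.character with hφqdef
  have hφqp : ∀ u : ↥U, φq (p u) = φ u := by
    intro u
    rw [hφW]
    show LinearMap.trace ℂ _ (Wq.ρ (p u)) = LinearMap.trace ℂ _ (W.ρ u)
    congr 1
    exact hρq u
  -- Wq is simple
  have hWpull : QSIAux.pull p Wq ≅ W := by
    refine Action.mkIso (CategoryTheory.Iso.refl W.V) ?_
    intro g
    simp only [CategoryTheory.Iso.refl_hom, CategoryTheory.Category.id_comp,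
      CategoryTheory.Category.comp_id]
    apply FGModuleCat.hom_ext
    exact hρq g
  have hWqsimp : CategoryTheory.Simple Wq :=
    (QSIAux.simple_pull_iff p hpsurj Wq).mp (CategoryTheory.Simple.of_iso hWpull)
  -- the kernel subgroup on the quotient side
  set Kq : Subgroup ↥Uq := K.map p with hKqdef
  have hKqnorm : Kq.Normal := hKnorm.map p hpsurj
  have hφq1 : φq 1 = φ 1 := by
    have := hφqp 1
    rw [map_one] at this
    exact this
  have hKmem : ∀ u : ↥U, u ∈ K ↔ φ u = φ 1 := by
    intro u
    constructor
    · intro hu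
      exact (Set.ext_iff.mp hKset u).mp hu
    · intro hu
      exact (Set.ext_iff.mp hKset u).mpr hu
  have hKqset : (Kq : Set ↥Uq) = {x : ↥Uq | φq x = φq 1} := by
    ext x
    simp only [Set.mem_setOf_eq, SetLike.mem_coe]
    constructor
    · intro hx
      obtain ⟨u, hu, rfl⟩ := Subgroup.mem_map.mp hx
      rw [hφqp, hφq1]
      exact (hKmem u).mp hu
    · intro hx
      obtain ⟨u, rfl⟩ := hpsurj x
      rw [hφqp, hφq1] at hx
      exact Subgroup.mem_map.mpr ⟨u, (hKmem u).mpr hx, rfl⟩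
  have hKqsolv : letI := hKqnorm; IsSolvable (↥Uq ⧸ Kq) := by
    letI := hKnorm
    letI := hKqnorm
    haveI : IsSolvable (↥U ⧸ K) := hKsolv
    have hle : K ≤ Kq.comap p := by
      intro u hu
      exact Subgroup.mem_comap.mpr (Subgroup.mem_map.mpr ⟨u, hu, rfl⟩)
    have hmsurj : Function.Surjective (QuotientGroup.map K Kq p hle) := by
      intro z
      obtain ⟨x, rfl⟩ := QuotientGroup.mk_surjective z
      obtain ⟨u, rfl⟩ := hpsurj x
      exact ⟨QuotientGroup.mk u, rfl⟩
    exact @Group.isSolvable_of_surjective _ _ _ _ _ hmsurj hKsolv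
  -- cardinalities
  have hcardUq : (Nat.card ↥U : ℂ) = (Nat.card ↥Uq : ℂ) * (Nat.card ↥N : ℂ) := by
    have h1 : Nat.card ↥U = Nat.card (↥U ⧸ p.ker) * Nat.card p.ker :=
      Subgroup.card_eq_card_quotient_mul_card_subgroup p.ker
    have h2 : Nat.card (↥U ⧸ p.ker) = Nat.card ↥Uq := Nat.card_congr e.toEquiv
    have h3 : Nat.card p.ker = Nat.card ↥N := by rw [hker]; exact hMN
    rw [h1, h2, h3]
    push_cast
    ring
  have hUqne : (Nat.card ↥Uq : ℂ) ≠ 0 := Nat.cast_ne_zero.mpr Nat.card_pos.ne'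
  -- Step J : the induced characters agree
  have hJ : ∀ g : G, inducedChar U φ g = inducedChar Uq φq (π g) := by
    intro g
    rw [inducedChar_eq_sum, inducedChar_eq_sum]
    have hterm : ∀ y : G,
        (if h : y⁻¹ * g * y ∈ U then φ ⟨y⁻¹ * g * y, h⟩ else 0)
        = (fun q : G ⧸ N => if h : q⁻¹ * (π g) * q ∈ Uq
            then φq ⟨q⁻¹ * (π g) * q, h⟩ else 0) ((y : G) : G ⧸ N) := by
      intro y
      have hmap : ((y : G ⧸ N))⁻¹ * (π g) * ((y : G ⧸ N)) = π (y⁻¹ * g * y) := by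
        rw [map_mul, map_mul, map_inv]
        rfl
      simp only []
      by_cases hy : y⁻¹ * g * y ∈ U
      · rw [dif_pos hy]
        have hy2 : ((y : G ⧸ N))⁻¹ * (π g) * ((y : G ⧸ N)) ∈ Uq := by
          rw [hmap]
          exact Subgroup.mem_map_of_mem π hy
        rw [dif_pos hy2]
        have hsub : (⟨((y : G ⧸ N))⁻¹ * (π g) * ((y : G ⧸ N)), hy2⟩ : ↥Uq)
            = p ⟨y⁻¹ * g * y, hy⟩ := by
          apply Subtype.ext
          exact hmap.trans rfl
        rw [hsub, hφqp]
      · rw [dif_neg hy, dif_neg]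
        intro hcon
        apply hy
        rw [hmap] at hcon
        obtain ⟨u, hu, huq⟩ := Subgroup.mem_map.mp hcon
        have hN1 : (u : G)⁻¹ * (y⁻¹ * g * y) ∈ N := QuotientGroup.eq.mp huq
        have hrw : y⁻¹ * g * y = (u : G) * ((u : G)⁻¹ * (y⁻¹ * g * y)) := by group
        rw [hrw]
        exact mul_mem hu (hNU hN1)
    rw [Finset.sum_congr rfl (fun y _ => hterm y)]
    rw [QSIAux.sum_quotient_fiber N
      (fun q : G ⧸ N => if h : q⁻¹ * (π g) * q ∈ Uq then φq ⟨q⁻¹ * (π g) * q, h⟩ else 0)]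
    rw [hcardUq, mul_inv, mul_assoc, inv_mul_cancel_left₀ hNne]
  -- Final assembly
  refine ⟨Uq, φq, ⟨Wq, hWqsimp, rfl⟩, ⟨k, hk, ?_⟩, ⟨Kq, hKqnorm, hKqset, hKqsolv⟩⟩
  intro x
  obtain ⟨g, rfl⟩ := hπ x
  rw [← hJ g]
  have := hInd g
  rw [QSIAux.pull_character] at this
  exact this
end
end

section
/- (Zsigmondy) Let d, n ∈ ℕ with d ≥ 2 and n ≥ 2. Then d^n − 1 has a primitive prime divisor, i.e. a prime p dividing d^n − 1 but dividing none of d^k − 1 for 1 ≤ k < n, except in the following cases: (d, n) = (2, 6), or n = 2 and d is a Mersenne prime (i.e. d + 1 is a power of 2). -/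
open scoped BigOperators Classical

noncomputable section

section ZsigmondyProof
open Polynomial Finset

namespace ZsigAux

lemma phi_dvd (d n : ℕ) : (cyclotomic n ℤ).eval (d:ℤ) ∣ (d:ℤ)^n - 1 := by
  simpa using eval_dvd (x := (d:ℤ)) (cyclotomic.dvd_X_pow_sub_one n ℤ)

lemma phi_mul_dvd {d n m : ℕ} (hm : m ∈ n.properDivisors) :
    ((d:ℤ)^m - 1) * (cyclotomic n ℤ).eval (d:ℤ) ∣ (d:ℤ)^n - 1 := by
  simpa using eval_dvd (x := (d:ℤ))
    (X_pow_sub_one_mul_cyclotomic_dvd_X_pow_sub_one_of_dvd ℤ hm)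

lemma root_mod {d n q : ℕ} (h : (q:ℤ) ∣ (cyclotomic n ℤ).eval (d:ℤ)) :
    (cyclotomic n (ZMod q)).IsRoot (d : ZMod q) := by
  have : (Int.cast ((cyclotomic n ℤ).eval (d:ℤ)) : ZMod q) = 0 := by
    obtain ⟨c, hc⟩ := h
    rw [hc]
    push_cast
    simp [ZMod.natCast_self]
  rw [IsRoot.def, ← map_cyclotomic_int n (ZMod q)]
  rw [show ((d:ℕ) : ZMod q) = (((d:ℕ):ℤ) : ZMod q) by push_cast; ring]
  rw [eval_intCast_map]
  simpa using this

lemma order_eq {d n q : ℕ} [Fact q.Prime] (hn : 0 < n) (hqn : ¬ q ∣ n)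
    (h : (q:ℤ) ∣ (cyclotomic n ℤ).eval (d:ℤ)) : orderOf (d : ZMod q) = n := by
  haveI : NeZero ((n : ZMod q)) :=
    ⟨by rwa [Ne, ZMod.natCast_eq_zero_iff]⟩
  have := (isRoot_cyclotomic_iff (R := ZMod q) (n := n)).mp (root_mod h)
  exact this.eq_orderOf.symm

lemma dvd_sub_one_iff {d k q : ℕ} (hd : 1 ≤ d) :
    q ∣ d ^ k - 1 ↔ (d : ZMod q) ^ k = 1 := by
  have h1 : 1 ≤ d ^ k := Nat.one_le_pow _ _ hd
  rw [← ZMod.natCast_eq_zero_iff, Nat.cast_sub h1]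
  push_cast
  constructor
  · intro h; linear_combination (norm := ring_nf) h -- (d^k - 1 = 0 → d^k = 1)
  · intro h; rw [h]; ring

lemma phi_dvd_geom_sum {d n ℓ : ℕ} (hd : 2 ≤ d) (hl : 2 ≤ ℓ) (hln : ℓ ∣ n) (hn : 0 < n) :
    (cyclotomic n ℤ).eval (d:ℤ) ∣ ∑ i ∈ range ℓ, ((d:ℤ) ^ (n / ℓ)) ^ i := by
  set m := n / ℓ with hm
  have hmn : m ∣ n := Nat.div_dvd_of_dvd hln
  have hmlt : m < n := Nat.div_lt_self hn (lt_of_lt_of_le one_lt_two hl)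
  have hm1 : 1 ≤ m := Nat.div_pos (Nat.le_of_dvd hn hln) (by omega)
  have hprop : m ∈ n.properDivisors := Nat.mem_properDivisors.mpr ⟨hmn, hmlt⟩
  have h1 : ((d:ℤ)^m - 1) * (cyclotomic n ℤ).eval (d:ℤ) ∣ (d:ℤ)^n - 1 := by
    simpa using eval_dvd (x := (d:ℤ))
      (X_pow_sub_one_mul_cyclotomic_dvd_X_pow_sub_one_of_dvd ℤ hprop)
  have hne : (d:ℤ)^m - 1 ≠ 0 := by
    have : (1:ℤ) < (d:ℤ)^m := by
      calc (1:ℤ) < (d:ℤ) := by exact_mod_cast hd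
        _ ≤ (d:ℤ)^m := le_self_pow₀ (by exact_mod_cast Nat.one_le_of_lt hd) (by omega)
    omega
  have hgeom : ((d:ℤ)^m - 1) * ∑ i ∈ range ℓ, ((d:ℤ) ^ m) ^ i = (d:ℤ)^n - 1 := by
    rw [mul_comm, geom_sum_mul, ← pow_mul, Nat.div_mul_cancel hln]
  rw [← hgeom] at h1
  exact (mul_dvd_mul_iff_left hne).mp h1

lemma key_contra {d n q ℓ : ℕ} (hd : 2 ≤ d) (hq : q.Prime) (hl : ℓ.Prime)
    (hln : ℓ ∣ n) (hne : q ≠ ℓ) (hn : 0 < n)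
    (hqΦ : (q:ℤ) ∣ (cyclotomic n ℤ).eval (d:ℤ))
    (he : (d : ZMod q) ^ (n / ℓ) = 1) : False := by
  have hS : (q:ℤ) ∣ ∑ i ∈ range ℓ, ((d:ℤ) ^ (n / ℓ)) ^ i :=
    hqΦ.trans (phi_dvd_geom_sum hd hl.two_le hln hn)
  have h0 : (Int.cast (∑ i ∈ range ℓ, ((d:ℤ) ^ (n / ℓ)) ^ i) : ZMod q) = 0 := by
    rw [ZMod.intCast_zmod_eq_zero_iff_dvd]; exact_mod_cast hS
  rw [Int.cast_sum] at h0
  have heq : ∀ i ∈ range ℓ, (Int.cast ((((d:ℤ) ^ (n / ℓ)) ^ i)) : ZMod q) = 1 := by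
    intro i _
    push_cast
    rw [he, one_pow]
  rw [Finset.sum_congr rfl heq, Finset.sum_const, card_range, nsmul_eq_mul, mul_one] at h0
  have : q ∣ ℓ := (ZMod.natCast_eq_zero_iff ℓ q).mp h0
  exact hne ((Nat.prime_dvd_prime_iff_eq hq hl).mp this)

lemma sq_not_dvd {d n q : ℕ} (hd : 2 ≤ d) (hq : q.Prime) (hodd : Odd q)
    (hqn : q ∣ n) (hn : 0 < n)
    (he : (d : ZMod q) ^ (n / q) = 1) :
    ¬ ((q:ℤ)^2 ∣ (cyclotomic n ℤ).eval (d:ℤ)) := by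
  intro hsq
  set t : ℤ := (d:ℤ) ^ (n / q) with ht
  set S : ℤ := ∑ i ∈ range q, t ^ i with hSdef
  have hΦS : (cyclotomic n ℤ).eval (d:ℤ) ∣ S := phi_dvd_geom_sum hd hq.two_le hqn hn
  have hqt : (q:ℤ) ∣ t - 1 := by
    rw [← ZMod.intCast_zmod_eq_zero_iff_dvd]
    push_cast [ht]
    rw [he]; ring
  set T : ℤ := ∑ i ∈ range q, ∑ j ∈ range i, t ^ j with hT
  have hqT : (q:ℤ) ∣ T := by
    rw [← ZMod.intCast_zmod_eq_zero_iff_dvd]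
    have hcast : (Int.cast T : ZMod q) = ((∑ i ∈ range q, i : ℕ) : ZMod q) := by
      rw [hT, Int.cast_sum]
      push_cast [ht]
      refine Finset.sum_congr rfl fun i _ => ?_
      have h1 : ∀ j ∈ range i, ((d : ZMod q) ^ (n/q)) ^ j = 1 := fun j _ => by rw [he, one_pow]
      rw [Finset.sum_congr rfl h1, Finset.sum_const, card_range, nsmul_eq_mul, mul_one]
    have hdvd : q ∣ ∑ i ∈ range q, i := by
      obtain ⟨v, hv⟩ := hodd
      have h2 : (∑ i ∈ range q, i) * 2 = q * (q - 1) := Finset.sum_range_id_mul_two q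
      have h3 : q - 1 = 2 * v := by omega
      have h4 : (∑ i ∈ range q, i) * 2 = q * v * 2 := by rw [h2, h3]; ring
      exact ⟨v, by omega⟩
    rw [hcast, ZMod.natCast_eq_zero_iff]
    exact hdvd
  have hSid : S = q + (t - 1) * T := by
    have hstep : ∀ i ∈ range q, t ^ i = 1 + (t - 1) * ∑ j ∈ range i, t ^ j := by
      intro i _
      have h := geom_sum_mul t i
      linarith
    rw [hSdef, Finset.sum_congr rfl hstep, Finset.sum_add_distrib, Finset.sum_const,
      card_range, ← Finset.mul_sum, ← hT]
    simp [nsmul_eq_mul]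
  have h2 : (q:ℤ)^2 ∣ (t-1) * T := by rw [sq]; exact mul_dvd_mul hqt hqT
  have hq2S : (q:ℤ)^2 ∣ S := dvd_trans hsq hΦS
  have hqq : (q:ℤ)^2 ∣ (q:ℤ) := by
    have := dvd_sub hq2S h2
    simpa [hSid] using this
  have hq1 : (1:ℤ) < (q:ℤ) := by exact_mod_cast hq.one_lt
  have := Int.le_of_dvd (by positivity) hqq
  nlinarith

lemma cyclotomic_eval_pow_prime_pow_mul {q e : ℕ} (hq : q.Prime) (he : 0 < e) :
    ∀ s : ℕ, 1 ≤ s → ∀ x : ℤ,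
      (cyclotomic (e * q ^ s) ℤ).eval x = (cyclotomic (e * q) ℤ).eval (x ^ q ^ (s - 1)) := by
  intro s
  induction s with
  | zero => omega
  | succ s ih =>
    intro _ x
    rcases Nat.eq_zero_or_pos s with rfl | hs
    · simp
    · have hdvd : q ∣ e * q ^ s := Dvd.dvd.mul_left (dvd_pow_self q hs.ne') e
      have hexp : cyclotomic (e * q ^ (s+1)) ℤ = expand ℤ q (cyclotomic (e * q ^ s) ℤ) := by
        rw [cyclotomic_expand_eq_cyclotomic hq hdvd, mul_assoc, pow_succ]
      rw [hexp, expand_eval, ih hs (x ^ q)]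
      congr 1
      rw [← pow_mul, ← pow_succ']
      congr 2
      omega

lemma two_pow_gt {q : ℕ} (hq : 2 ≤ q) : q + 1 < 2 ^ q := by
  induction q with
  | zero => omega
  | succ m ih =>
    rcases Nat.lt_or_ge m 2 with hm | hm
    · interval_cases m <;> simp_all <;> omega
    · have := ih hm
      have h2 : 2 ^ m ≥ 2 := Nat.one_lt_two_pow (by omega)
      calc m + 1 + 1 < 2^m + 2^m := by omega
        _ = 2 ^ (m+1) := by ring
lemma three_mul_lt {q : ℕ} (hq : 5 ≤ q) : 3 * q < 2 ^ q - 1 := by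
  induction q with
  | zero => omega
  | succ m ih =>
    rcases Nat.lt_or_ge m 5 with hm | hm
    · interval_cases m <;> first | omega | norm_num
    · have := ih hm
      have h2 : 2 ^ m ≥ 32 := by calc 2^m ≥ 2^5 := Nat.pow_le_pow_right (by norm_num) hm
                                    _ = 32 := by norm_num
      have : 2 ^ (m+1) = 2 * 2^m := by ring
      omega

lemma exists_odd_prime_factor {m : ℕ} (hm : 2 ≤ m) (h : ¬ ∃ j, m = 2 ^ j) :
    ∃ p, p.Prime ∧ p ∣ m ∧ p ≠ 2 := by
  by_contra hc
  push_neg at hc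
  exact h ⟨m.primeFactorsList.length,
    Nat.eq_prime_pow_of_unique_prime_dvd (by omega)
      (fun {r} hr hrd => hc r hr hrd)⟩

lemma eval_two_le (e : ℕ) : (cyclotomic e ℤ).eval 2 ≤ (3:ℤ) ^ Nat.totient e := by
  have hR : ((cyclotomic e ℝ).eval ((2:ℤ) : ℝ)) = (((cyclotomic e ℤ).eval 2 : ℤ) : ℝ) :=
    cyclotomic.eval_apply (2:ℤ) e (algebraMap ℤ ℝ)
  have hle := cyclotomic_eval_le_add_one_pow_totient (q := (2:ℝ)) (by norm_num) e
  rw [← @Int.cast_le ℝ]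
  push_cast
  rw [show ((2:ℤ):ℝ) = (2:ℝ) by norm_num] at hR
  rw [← hR]
  exact hle.trans (by norm_num)

end ZsigAux

open ZsigAux

/-- **Zsigmondy's theorem.** For `d, n ≥ 2`, the number `d^n - 1` has a primitive prime
divisor (a prime dividing `d^n - 1` but no `d^k - 1` for `1 ≤ k < n`), except when
`(d, n) = (2, 6)` or `n = 2` and `d` is a Mersenne prime (i.e. `d + 1` is a power of `2`). -/
theorem zsigmondy (d n : ℕ) (hd : 2 ≤ d) (hn : 2 ≤ n)
    (h1 : ¬ (d = 2 ∧ n = 6)) (h2 : ¬ (n = 2 ∧ ∃ j : ℕ, d + 1 = 2 ^ j)) :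
    ∃ p : ℕ, p.Prime ∧ p ∣ d ^ n - 1 ∧
      ∀ k : ℕ, 1 ≤ k → k < n → ¬ p ∣ d ^ k - 1 := by
  rcases eq_or_lt_of_le hn with hn2 | hn3
  · -- n = 2
    obtain rfl : n = 2 := hn2.symm
    have hnopow : ¬ ∃ j, d + 1 = 2 ^ j := fun hj => h2 ⟨rfl, hj⟩
    obtain ⟨p, pp, hpd, hp2⟩ := exists_odd_prime_factor (m := d + 1) (by omega) hnopow
    haveI := Fact.mk pp
    have hdm : ((d : ZMod p)) = -1 := by
      have h0 : ((d + 1 : ℕ) : ZMod p) = 0 := (ZMod.natCast_eq_zero_iff _ _).mpr hpd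
      push_cast at h0
      linear_combination h0
    refine ⟨p, pp, ?_, ?_⟩
    · rw [dvd_sub_one_iff (by omega)]
      rw [hdm]; ring
    · intro k hk1 hk2 hkd
      have hk : k = 1 := by omega
      subst hk
      rw [dvd_sub_one_iff (by omega)] at hkd
      rw [hdm] at hkd
      have : ((2 : ℕ) : ZMod p) = 0 := by push_cast; linear_combination -hkd
      have := (ZMod.natCast_eq_zero_iff _ _).mp this
      rcases (Nat.prime_dvd_prime_iff_eq pp Nat.prime_two).mp this with rfl
      exact hp2 rfl
  · -- n ≥ 3
    by_contra hcon
    push_neg at hcon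
    have hn0 : 0 < n := by omega
    have hd1 : (1:ℤ) < (d:ℤ) := by exact_mod_cast hd
    set Φ : ℤ := (cyclotomic n ℤ).eval (d:ℤ) with hΦ
    have hΦpos : 0 < Φ := cyclotomic_pos' n hd1
    set N : ℕ := Φ.natAbs with hNdef
    have hNΦ : (N:ℤ) = Φ := Int.natAbs_of_nonneg hΦpos.le
    have hN1 : 1 < N := by
      have hb := sub_one_pow_totient_lt_natAbs_cyclotomic_eval (n := n) (q := d)
        (by omega) (by omega)
      have h1' : 1 ≤ (d-1) ^ (Nat.totient n) := Nat.one_le_pow _ _ (by omega)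
      omega
    -- key facts about any prime factor of N
    have key : ∀ r : ℕ, r.Prime → r ∣ N →
        (d : ZMod r) ^ n = 1 ∧ r ∣ n ∧ orderOf ((d : ZMod r)) ∣ n ∧
        orderOf ((d : ZMod r)) ∣ r - 1 ∧ 0 < orderOf ((d : ZMod r)) ∧
        (∀ ℓ : ℕ, ℓ.Prime → ℓ ∣ n / orderOf ((d : ZMod r)) → ℓ = r) := by
      intro r hr hrN
      haveI := Fact.mk hr
      have hrΦ : (r:ℤ) ∣ Φ := by rw [← hNΦ]; exact_mod_cast hrN
      have hpow : (d : ZMod r) ^ n = 1 := by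
        have h := hrΦ.trans (phi_dvd d n)
        have h0 : (Int.cast ((d:ℤ)^n - 1) : ZMod r) = 0 := by
          rw [ZMod.intCast_zmod_eq_zero_iff_dvd]; exact_mod_cast h
        push_cast at h0
        linear_combination h0
      have hrdn : r ∣ d ^ n - 1 := (dvd_sub_one_iff (by omega)).mpr hpow
      obtain ⟨k, hk1, hkn, hkdvd⟩ := hcon r hr hrdn
      have hordk : orderOf ((d : ZMod r)) ∣ k :=
        orderOf_dvd_of_pow_eq_one ((dvd_sub_one_iff (by omega)).mp hkdvd)
      have hepos : 0 < orderOf ((d : ZMod r)) :=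
        (isOfFinOrder_iff_pow_eq_one.mpr ⟨n, hn0, hpow⟩).orderOf_pos
      have helt : orderOf ((d : ZMod r)) < n :=
        lt_of_le_of_lt (Nat.le_of_dvd (by omega) hordk) hkn
      have hen : orderOf ((d : ZMod r)) ∣ n := orderOf_dvd_of_pow_eq_one hpow
      have hrn : r ∣ n := by
        by_contra hrn'
        have := order_eq hn0 hrn' hrΦ
        omega
      have hdne : (d : ZMod r) ≠ 0 := by
        intro h0; rw [h0, zero_pow hn0.ne'] at hpow; exact zero_ne_one hpow
      have herd : orderOf ((d : ZMod r)) ∣ r - 1 :=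
        orderOf_dvd_of_pow_eq_one (ZMod.pow_card_sub_one_eq_one hdne)
      refine ⟨hpow, hrn, hen, herd, hepos, ?_⟩
      intro ℓ hl hle
      by_contra hlr
      have hldn : ℓ ∣ n := hle.trans (Nat.div_dvd_of_dvd hen)
      have hednl : orderOf ((d : ZMod r)) ∣ n / ℓ := by
        obtain ⟨w, hw⟩ := hle
        have hnn : n = orderOf ((d : ZMod r)) * (ℓ * w) := by
          rw [← hw, Nat.mul_div_cancel' hen]
        refine ⟨w, ?_⟩
        rw [hnn, show orderOf ((d : ZMod r)) * (ℓ * w) = ℓ * (orderOf ((d : ZMod r)) * w)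
          by ring, Nat.mul_div_cancel_left _ hl.pos]
      have hepow : (d : ZMod r) ^ (n / ℓ) = 1 := orderOf_dvd_iff_pow_eq_one.mp hednl
      exact key_contra hd hr hl hldn (fun h => hlr h.symm) hn0 hrΦ hepow
    -- at most one prime factor
    have hlt : ∀ r r' : ℕ, r.Prime → r'.Prime → r ∣ N → r' ∣ N → r' ≠ r → r' < r := by
      intro r r' hr hr' hrN hr'N hne
      obtain ⟨-, hrn, hen, herd, hepos, hloc⟩ := key r hr hrN
      obtain ⟨-, hr'n, -⟩ := key r' hr' hr'N
      have hsplit : r' ∣ orderOf ((d : ZMod r)) * (n / orderOf ((d : ZMod r))) := by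
        rwa [Nat.mul_div_cancel' hen]
      rcases (Nat.Prime.dvd_mul hr').mp hsplit with hcase | hcase
      · have hord1 : 0 < r - 1 := by have := hr.two_le; omega
        have := Nat.le_of_dvd hord1 (hcase.trans herd)
        omega
      · exact absurd (hloc r' hr' hcase) hne
    have hall : ∀ r, r.Prime → r ∣ N → r = N.minFac := by
      intro r hr hrN
      by_contra hne
      have h1' := hlt _ _ (Nat.minFac_prime (by omega)) hr (Nat.minFac_dvd N) hrN hne
      have h2' := hlt _ _ hr (Nat.minFac_prime (by omega)) hrN (Nat.minFac_dvd N)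
        (fun h => hne h.symm)
      omega
    set q := N.minFac with hqdef
    have hqprime : q.Prime := Nat.minFac_prime (by omega)
    haveI := Fact.mk hqprime
    have hqN : q ∣ N := Nat.minFac_dvd N
    have hqΦ : (q:ℤ) ∣ Φ := by rw [← hNΦ]; exact_mod_cast hqN
    obtain ⟨hqpow, hqn, hqen, hqerd, hqepos, hqloc⟩ := key q hqprime hqN
    obtain ⟨c, hc⟩ : ∃ c, N = q ^ c :=
      ⟨_, Nat.eq_prime_pow_of_unique_prime_dvd (by omega) (fun {r} hr hrd => hall r hr hrd)⟩
    have hc1 : 1 ≤ c := by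
      rcases Nat.eq_zero_or_pos c with rfl | h
      · rw [pow_zero] at hc; omega
      · exact h
    set e := orderOf ((d : ZMod q)) with hE
    obtain ⟨s, hs⟩ : ∃ s, n / e = q ^ s :=
      ⟨_, Nat.eq_prime_pow_of_unique_prime_dvd
        (by have := Nat.div_pos (Nat.le_of_dvd hn0 hqen) hqepos; omega)
        (fun {r} hr hrd => hqloc r hr hrd)⟩
    have hnes : n = e * q ^ s := by rw [← hs, Nat.mul_div_cancel' hqen]
    have hqnote : ¬ q ∣ e := by
      intro hqe
      have hq1 : 0 < q - 1 := by have := hqprime.two_le; omega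
      have := Nat.le_of_dvd hq1 (hqe.trans hqerd)
      omega
    have hs1 : 1 ≤ s := by
      by_contra hs0
      have : s = 0 := by omega
      subst this
      rw [pow_zero, mul_one] at hnes
      exact hqnote (hnes ▸ hqn)
    rcases eq_or_ne q 2 with hq2 | hqodd
    · -- q = 2 : n = 2^s, contradiction mod 4
      have he1 : e = 1 := Nat.dvd_one.mp (by simpa [hq2] using hqerd)
      have hn2s : n = 2 ^ s := by rw [hnes, he1, one_mul, hq2]
      have hs2 : 2 ≤ s := by
        by_contra hs'
        have hle : (2:ℕ)^s ≤ 2^1 := Nat.pow_le_pow_right (by norm_num) (by omega)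
        norm_num at hle
        omega
      have hdodd : ¬ 2 ∣ d := by
        intro h2d
        have h0 : ((d : ℕ) : ZMod q) = 0 :=
          (ZMod.natCast_eq_zero_iff d q).mpr (by rw [hq2]; exact h2d)
        rw [h0, zero_pow hn0.ne'] at hqpow
        exact zero_ne_one hqpow
      have hΦform : Φ = 1 + (d:ℤ) ^ (2 ^ (s-1)) := by
        have hcyc : cyclotomic (2 ^ s) ℤ = ∑ i ∈ range 2, (X ^ 2 ^ (s-1)) ^ i := by
          have hgeo := cyclotomic_prime_pow_eq_geom_sum (R := ℤ) (p := 2) (n := s - 1)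
            Nat.prime_two
          rw [show s - 1 + 1 = s by omega] at hgeo
          exact hgeo
        rw [hΦ, hn2s, hcyc]
        simp [Finset.sum_range_succ]
      have hNform : N = d ^ (2 ^ (s-1)) + 1 := by
        have : (N:ℤ) = ((d ^ (2 ^ (s-1)) + 1 : ℕ) : ℤ) := by
          rw [hNΦ, hΦform]; push_cast; ring
        exact_mod_cast this
      have hexp : 2 ^ (s-1) = 2 ^ (s-2) * 2 := by
        rw [← pow_succ]; congr 1; omega
      have hN' : N = (d ^ (2 ^ (s-2))) ^ 2 + 1 := by rw [hNform, hexp, pow_mul]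
      have huodd : ¬ 2 ∣ d ^ (2 ^ (s-2)) := by
        intro hdvd
        exact hdodd (Nat.Prime.dvd_of_dvd_pow Nat.prime_two hdvd)
      have hu2 : 2 ≤ d ^ (2 ^ (s-2)) := by
        calc 2 ≤ d := hd
          _ ≤ d ^ (2 ^ (s-2)) := Nat.le_self_pow (pow_pos (by norm_num : (0:ℕ) < 2) _).ne' d
      have hNbig : 5 ≤ N := by nlinarith [hN', hu2]
      have hc2 : 2 ≤ c := by
        by_contra hcle
        have hc1' : c = 1 := by omega
        rw [hc1', pow_one, hq2] at hc
        omega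
      have h4N : (4 : ℕ) ∣ N := by
        rw [hc, hq2]
        exact (show (4:ℕ) = 2^2 by norm_num) ▸ pow_dvd_pow 2 hc2
      obtain ⟨v, hv⟩ : ∃ v, d ^ (2 ^ (s-2)) = 2 * v + 1 := by
        rcases Nat.even_or_odd (d ^ (2 ^ (s-2))) with hev | hod
        · exact absurd hev.two_dvd huodd
        · obtain ⟨v, hv⟩ := hod; exact ⟨v, by omega⟩
      have : N = 4 * (v * v + v) + 2 := by rw [hN', hv]; ring
      omega
    · -- q odd
      have hoddq : Odd q := hqprime.odd_of_ne_two hqodd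
      have hednq : e ∣ n / q := by
        have hnq : n / q = e * q ^ (s-1) := by
          have hn' : n = q * (e * q ^ (s-1)) := by
            rw [hnes, show q * (e * q ^ (s-1)) = e * (q ^ (s-1) * q) by ring, ← pow_succ]
            congr 2
            omega
          rw [hn', Nat.mul_div_cancel_left _ hqprime.pos]
        rw [hnq]
        exact dvd_mul_right e _
      have hepowq : (d : ZMod q) ^ (n / q) = 1 := orderOf_dvd_iff_pow_eq_one.mp hednq
      have hnsq : ¬ ((q:ℤ) ^ 2 ∣ Φ) := sq_not_dvd hd hqprime hoddq hqn hn0 hepowq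
      have hceq : c = 1 := by
        by_contra hcne
        have h2c : 2 ≤ c := by omega
        have : (q:ℤ) ^ 2 ∣ (N:ℤ) := by
          rw [hc]
          push_cast
          exact pow_dvd_pow (q:ℤ) h2c
        exact hnsq (hNΦ ▸ this)
      have hNq : N = q := by rw [hc, hceq, pow_one]
      have hbound : (d - 1) ^ (Nat.totient n) < q := by
        have hb := sub_one_pow_totient_lt_natAbs_cyclotomic_eval (n := n) (q := d)
          (by omega) (by omega)
        omega
      rcases eq_or_lt_of_le hd with hd2 | hd3
      · -- d = 2
        obtain rfl : d = 2 := hd2.symm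
        have he2 : 2 ≤ e := by
          rcases Nat.lt_or_ge e 2 with he' | he'
          · exfalso
            have he1 : e = 1 := by omega
            have hd1' : ((2 : ℕ) : ZMod q) = 1 := orderOf_eq_one_iff.mp (hE.symm.trans he1)
            have : ((1 : ℕ) : ZMod q) = 0 := by push_cast at hd1' ⊢; linear_combination hd1'
            have := (ZMod.natCast_eq_zero_iff _ _).mp this
            have := Nat.le_of_dvd one_pos this
            have := hqprime.two_le
            omega
          · exact he'
        rcases eq_or_lt_of_le hs1 with hs1' | hs2
        · -- s = 1 : n = e*q
          obtain rfl : s = 1 := hs1'.symm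
          rw [pow_one] at hnes
          rcases eq_or_ne q 3 with hq3 | hq5
          · -- q = 3 ⟹ n = 6 : excluded
            have he' : e ∣ 2 := by simpa [hq3] using hqerd
            have he2' : e = 2 := by
              have := Nat.le_of_dvd two_pos he'
              omega
            exact h1 ⟨rfl, by rw [hnes, he2', hq3]⟩
          · have hq5' : 5 ≤ q := by
              have hne4 : q ≠ 4 := by intro h4; rw [h4] at hqprime; norm_num at hqprime
              have := hqprime.two_le
              rcases hoddq with ⟨t, ht⟩
              omega
            have hexpand := cyclotomic_expand_eq_cyclotomic_mul (p := q) (n := e)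
              hqprime hqnote ℤ
            have heval := congrArg (Polynomial.eval ((2:ℤ))) hexpand
            rw [expand_eval, eval_mul] at heval
            -- heval : eval (2^q) (cyclotomic e ℤ) = eval 2 (cyclotomic (e*q) ℤ) * eval 2 (cyclotomic e ℤ)
            have hBpos : 0 < (cyclotomic e ℤ).eval 2 := cyclotomic_pos' e (by norm_num)
            have hBle : ((cyclotomic e ℤ).eval 2).natAbs ≤ 3 ^ (Nat.totient e) := by
              have := eval_two_le e
              have hcast : (((cyclotomic e ℤ).eval 2).natAbs : ℤ) = (cyclotomic e ℤ).eval 2 :=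
                Int.natAbs_of_nonneg hBpos.le
              have : (((cyclotomic e ℤ).eval 2).natAbs : ℤ) ≤ ((3:ℕ) : ℤ) ^ (Nat.totient e) := by
                rw [hcast]; exact_mod_cast this
              exact_mod_cast this
            have hA : ((2:ℕ) ^ q - 1) ^ (Nat.totient e) <
                ((cyclotomic e ℤ).eval (((2:ℕ) ^ q : ℕ) : ℤ)).natAbs :=
              sub_one_pow_totient_lt_natAbs_cyclotomic_eval (by omega)
                (by have := two_pow_gt hqprime.two_le; omega)
            have hAeq : ((cyclotomic e ℤ).eval (((2:ℕ) ^ q : ℕ) : ℤ)).natAbs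
                = N * ((cyclotomic e ℤ).eval 2).natAbs := by
              have hpc : (((2:ℕ) ^ q : ℕ) : ℤ) = (2:ℤ) ^ q := by push_cast; ring
              rw [hpc, heval, ← hnes]
              rw [Int.natAbs_mul]
              congr 1
            have hφe : 1 ≤ Nat.totient e := Nat.totient_pos.mpr (by omega)
            have hfinal : ((2:ℕ) ^ q - 1) ^ (Nat.totient e) < (3 * q) ^ (Nat.totient e) := by
              calc ((2:ℕ) ^ q - 1) ^ (Nat.totient e)
                  < N * ((cyclotomic e ℤ).eval 2).natAbs := by rw [← hAeq]; exact hA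
                _ ≤ q * 3 ^ (Nat.totient e) := by
                    rw [hNq]; exact Nat.mul_le_mul_left q hBle
                _ ≤ q ^ (Nat.totient e) * 3 ^ (Nat.totient e) := by
                    exact Nat.mul_le_mul_right _ (Nat.le_self_pow (by omega) q)
                _ = (3 * q) ^ (Nat.totient e) := by rw [← Nat.mul_pow]; ring_nf
            have hlt' : (2:ℕ) ^ q - 1 < 3 * q := by
              by_contra hge
              push_neg at hge
              exact absurd hfinal (not_lt.mpr (Nat.pow_le_pow_left hge _))
            have := three_mul_lt hq5'
            omega
        · -- s ≥ 2
          have hEQ : Φ = (cyclotomic (e * q) ℤ).eval ((2:ℤ) ^ q ^ (s-1)) := by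
            rw [hΦ, hnes]
            exact cyclotomic_eval_pow_prime_pow_mul hqprime (by omega) s hs1 ((2:ℕ):ℤ)
          have hb1 : (2:ℕ) ^ (q ^ (s-1)) ≠ 1 := by
            have : 0 < q ^ (s-1) := pow_pos hqprime.pos _
            have := Nat.one_lt_two_pow (n := q ^ (s-1)) (by omega)
            omega
          have hA : ((2:ℕ) ^ (q ^ (s-1)) - 1) ^ (Nat.totient (e * q)) <
              ((cyclotomic (e * q) ℤ).eval (((2:ℕ) ^ (q ^ (s-1)) : ℕ) : ℤ)).natAbs :=
            sub_one_pow_totient_lt_natAbs_cyclotomic_eval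
              (by have := hqprime.two_le; nlinarith) hb1
          have hAeqN : ((cyclotomic (e * q) ℤ).eval (((2:ℕ) ^ (q ^ (s-1)) : ℕ) : ℤ)).natAbs
              = N := by
            rw [hNdef, hEQ]
            congr 1
          have hφ : 1 ≤ Nat.totient (e * q) :=
            Nat.totient_pos.mpr (by have := hqprime.pos; positivity)
          have hqs : q ≤ q ^ (s-1) := Nat.le_self_pow (by omega) q
          have h2q : (2:ℕ) ^ q ≤ 2 ^ (q ^ (s-1)) := Nat.pow_le_pow_right (by norm_num) hqs
          have hgt := two_pow_gt hqprime.two_le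
          have hge : (2:ℕ) ^ (q ^ (s-1)) - 1
              ≤ ((2:ℕ) ^ (q ^ (s-1)) - 1) ^ (Nat.totient (e * q)) :=
            Nat.le_self_pow (by omega) _
          omega
      · -- d ≥ 3
        have hphi : q - 1 ≤ Nat.totient n := by
          have hdvd := Nat.totient_dvd_of_dvd hqn
          rw [Nat.totient_prime hqprime] at hdvd
          exact Nat.le_of_dvd (Nat.totient_pos.mpr hn0) hdvd
        have hq3 : 3 ≤ q := by
          have := hqprime.two_le
          rcases hoddq with ⟨t, ht⟩
          omega
        have h2q : q < 2 ^ (q - 1) := by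
          have := two_pow_gt (q := q - 1) (by omega)
          omega
        have hmono : (2:ℕ) ^ (q-1) ≤ (d-1) ^ (Nat.totient n) := by
          calc (2:ℕ) ^ (q-1) ≤ 2 ^ (Nat.totient n) := Nat.pow_le_pow_right (by norm_num) hphi
            _ ≤ (d-1) ^ (Nat.totient n) := Nat.pow_le_pow_left (by omega) _
        omega

end ZsigmondyProof
end
end

section
/- Let q be a prime power, n ≥ 2, and let p be a primitive prime divisor of q^n − 1 (i.e. p divides q^n − 1 but p does not divide q^k − 1 for 1 ≤ k < n). If g ∈ GL_n(𝔽_q) is an element whose order is divisible by p, then g acts irreducibly on V = (𝔽_q)^n, i.e. the only g-invariant subspaces of V are 0 and V. -/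
open scoped BigOperators Classical

noncomputable section

/-- If a prime `p` not dividing `q = |F|` divides `|GL_k(F)|`, then `p ∣ q^j - 1` for some
`1 ≤ j ≤ k`. -/
lemma aux_primdvd (F : Type) [Field F] [Fintype F] (p k : ℕ) (hp : p.Prime)
    (hpq : ¬ p ∣ Fintype.card F) (h : p ∣ Nat.card (GL (Fin k) F)) :
    ∃ j : ℕ, 1 ≤ j ∧ j ≤ k ∧ p ∣ Fintype.card F ^ j - 1 := by
  set q := Fintype.card F with hq
  rw [Matrix.card_GL_field] at h
  obtain ⟨i, -, hi⟩ := hp.prime.exists_mem_finset_dvd h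
  have hik : (i : ℕ) < k := i.isLt
  have hfact : q ^ k - q ^ (i : ℕ) = q ^ (i : ℕ) * (q ^ (k - (i : ℕ)) - 1) := by
    rw [Nat.mul_sub, mul_one, ← pow_add]
    congr 2
    omega
  rw [hfact] at hi
  have hpqi : ¬ p ∣ q ^ (i : ℕ) := fun hd => hpq (hp.dvd_of_dvd_pow hd)
  have := (hp.dvd_mul.mp hi).resolve_left hpqi
  exact ⟨k - i, by omega, by omega, this⟩

/-- If a finite-dimensional module over a finite field admits an endomorphism `f ≠ 1` with
`f ^ p = 1` for a prime `p`, then `p` divides the order of `GL_k(F)`, `k = dim M`. -/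
lemma aux_order (F : Type) [Field F] [Fintype F] {M : Type} [AddCommGroup M] [Module F M]
    [Module.Finite F M] (p : ℕ) (hp : p.Prime) (f : Module.End F M)
    (hf1 : f ^ p = 1) (hfne : f ≠ 1) :
    p ∣ Nat.card (GL (Fin (Module.finrank F M)) F) := by
  have hpos : 0 < p := hp.pos
  have hfp : f ^ (p - 1 + 1) = 1 := by rw [Nat.sub_add_cancel hpos]; exact hf1
  let u : (Module.End F M)ˣ :=
    ⟨f, f ^ (p - 1), by rw [← pow_succ']; exact hfp, by rw [← pow_succ]; exact hfp⟩
  have hu : (u : Module.End F M) = f := rfl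
  let b := Module.finBasis F M
  let e : (Module.End F M)ˣ ≃*
      (Matrix (Fin (Module.finrank F M)) (Fin (Module.finrank F M)) F)ˣ :=
    Units.mapEquiv (algEquivMatrix b).toRingEquiv.toMulEquiv
  haveI : Fact p.Prime := ⟨hp⟩
  have hord : orderOf (e u) = p := by
    rw [e.orderOf_eq]
    refine orderOf_eq_prime ?_ ?_
    · ext
      rw [Units.val_pow_eq_pow_val, hu, hf1, Units.val_one]
    · intro h1
      apply hfne
      rw [← hu, h1, Units.val_one]
  have : Finite (Matrix (Fin (Module.finrank F M)) (Fin (Module.finrank F M)) F)ˣ :=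
    inferInstance
  rw [← hord]
  exact orderOf_dvd_natCard _

/-- If `p` is a primitive prime divisor of `q^n - 1` and `g ∈ GL_n(F_q)` has order divisible
by `p`, then `g` acts irreducibly on `V = F_q^n`. -/
theorem irreducible_of_primitive_prime_divisor_dvd_orderOf (F : Type) [Field F] [Fintype F]
    (n : ℕ) (hn : 2 ≤ n) (p : ℕ) (hp : p.Prime)
    (hdvd : p ∣ Fintype.card F ^ n - 1)
    (hprim : ∀ k : ℕ, 1 ≤ k → k < n → ¬ p ∣ Fintype.card F ^ k - 1)
    (g : LinearMap.GeneralLinearGroup F (Fin n → F)) (hg : p ∣ orderOf g)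
    (W : Submodule F (Fin n → F))
    (hW : ∀ x ∈ W, (g : (Fin n → F) →ₗ[F] (Fin n → F)) x ∈ W) :
    W = ⊥ ∨ W = ⊤ := by
  classical
  by_contra hcon
  push_neg at hcon
  obtain ⟨hWbot, hWtop⟩ := hcon
  set q := Fintype.card F with hqdef
  have hq1 : 1 < q := Fintype.one_lt_card
  have hqn1 : 1 ≤ q ^ n := Nat.one_le_pow _ _ (by omega)
  -- p does not divide q
  have hpq : ¬ p ∣ q := by
    intro hd
    have h1 : p ∣ q ^ n := hd.trans (dvd_pow_self q (by omega))
    have h2 : p ∣ q ^ n - (q ^ n - 1) := Nat.dvd_sub h1 hdvd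
    rw [Nat.sub_sub_self hqn1] at h2
    exact hp.one_lt.ne' (Nat.eq_one_of_dvd_one h2 ▸ rfl)
  -- the group is finite
  have hfinEnd : Finite ((Fin n → F) →ₗ[F] (Fin n → F)) :=
    Finite.of_injective _ LinearMap.coe_injective
  have hfinG : Finite (LinearMap.GeneralLinearGroup F (Fin n → F)) := inferInstance
  -- element of order p
  have hordg : orderOf g ≠ 0 := (orderOf_pos g).ne'
  set h : LinearMap.GeneralLinearGroup F (Fin n → F) := g ^ (orderOf g / p) with hhdef
  have hordh : orderOf h = p := orderOf_pow_orderOf_div hordg hg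
  have hhp : h ^ p = 1 := by rw [← hordh]; exact pow_orderOf_eq_one h
  have hhne : h ≠ 1 := by
    intro h1
    rw [h1, orderOf_one] at hordh
    exact hp.one_lt.ne' hordh.symm
  -- the underlying endomorphism
  set fE : Module.End F (Fin n → F) := (h : (Fin n → F) →ₗ[F] (Fin n → F)) with hfEdef
  have hfEp : fE ^ p = 1 := by
    rw [hfEdef, ← Units.val_pow_eq_pow_val, hhp, Units.val_one]
  have hfEne : fE ≠ 1 := by
    intro h1
    exact hhne (Units.ext h1)
  -- W is invariant under fE
  have hWh : ∀ x ∈ W, fE x ∈ W := by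
    intro x hx
    rw [hfEdef, hhdef, Units.val_pow_eq_pow_val]
    exact Module.End.pow_apply_mem_of_forall_mem _ hW x hx
  -- dimensions
  have hrankV : Module.finrank F (Fin n → F) = n := by
    simp [Module.finrank_fintype_fun_eq_card]
  set k : ℕ := Module.finrank F W with hkdef
  have hklt : k < n := by
    have := Submodule.finrank_lt (K := F) (V := Fin n → F) hWtop
    omega
  have hkpos : 0 < k := by
    rcases Nat.eq_zero_or_pos k with h0 | h0
    · exact absurd (Submodule.finrank_eq_zero.mp (hkdef ▸ h0)) hWbot
    · exact h0
  -- restriction to W and quotient endomorphism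
  have hWle : W ≤ W.comap fE := fun x hx => hWh x hx
  set fW : Module.End F W := fE.restrict hWh with hfWdef
  have hfWp : fW ^ p = 1 := by
    rw [hfWdef, Module.End.pow_restrict]
    refine LinearMap.ext fun x => Subtype.ext ?_
    rw [LinearMap.restrict_coe_apply, hfEp]
    rfl
  set fQ : Module.End F ((Fin n → F) ⧸ W) := W.mapQ W fE hWle with hfQdef
  have hfQp : fQ ^ p = 1 := by
    rw [hfQdef, ← W.mapQ_pow hWle p]
    refine LinearMap.ext fun x => ?_
    obtain ⟨y, rfl⟩ := Submodule.Quotient.mk_surjective W x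
    rw [Submodule.mapQ_apply, hfEp]
    rfl
  by_cases hfW1 : fW = 1
  · by_cases hfQ1 : fQ = 1
    · -- unipotent case: h acts trivially on W and on the quotient, contradiction
      set N : Module.End F (Fin n → F) := fE - 1 with hNdef
      have hNW : ∀ x ∈ W, N x = 0 := by
        intro x hx
        have h1 : fE x = x := by
          have h2 := congrArg Subtype.val (LinearMap.ext_iff.mp hfW1 ⟨x, hx⟩)
          rwa [hfWdef, LinearMap.restrict_coe_apply] at h2
        simp [hNdef, h1]
      have hNmem : ∀ x, N x ∈ W := by
        intro x
        have h1 := LinearMap.ext_iff.mp hfQ1 (Submodule.Quotient.mk x)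
        rw [hfQdef, Submodule.mapQ_apply] at h1
        have h2 : fE x - x ∈ W := (Submodule.Quotient.eq W).mp (by simpa using h1)
        simpa [hNdef] using h2
      have hN2 : N * N = 0 := by
        refine LinearMap.ext fun x => ?_
        simp only [Module.End.mul_apply, LinearMap.zero_apply]
        exact hNW _ (hNmem x)
      have hkey : ∀ m : ℕ, (1 + N) ^ m = 1 + m • N := by
        intro m
        induction m with
        | zero => simp
        | succ m ih =>
          have hmN : m • N * N = 0 := by rw [smul_mul_assoc, hN2, smul_zero]
          rw [pow_succ, ih, add_mul, mul_add, mul_add, hmN, one_mul, mul_one, add_zero,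
            succ_nsmul]
          noncomm_ring
      have hfEN : fE = 1 + N := by rw [hNdef]; abel
      have hpN : p • N = 0 := by
        have h1 := hfEp
        rw [hfEN, hkey p] at h1
        have h2 := congrArg (fun z => z - 1) h1
        simpa using h2
      have hpF : (p : F) ≠ 0 := by
        intro h0
        haveI := ringChar.charP F
        have hr : ringChar F ∣ p := (CharP.cast_eq_zero_iff F (ringChar F) p).mp h0
        have hrprime : (ringChar F).Prime := CharP.char_is_prime F (ringChar F)
        have hrp : ringChar F = p := (Nat.prime_dvd_prime_iff_eq hrprime hp).mp hr
        have hq0 : ((q : ℕ) : F) = 0 := by rw [hqdef]; exact Nat.cast_card_eq_zero F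
        have : p ∣ q := hrp ▸ (CharP.cast_eq_zero_iff F (ringChar F) q).mp hq0
        exact hpq this
      have hNzero : N = 0 := by
        refine LinearMap.ext fun x => ?_
        have h1 : p • N x = 0 := by
          rw [← LinearMap.smul_apply, hpN, LinearMap.zero_apply]
        have h2 : (p : F) • N x = 0 := by
          rw [Nat.cast_smul_eq_nsmul]; exact h1
        have := (smul_eq_zero.mp h2).resolve_left hpF
        simpa using this
      exact hfEne (by rw [hfEN, hNzero, add_zero])
    · -- h acts nontrivially on the quotient
      have hd := aux_order F p hp fQ hfQp hfQ1
      have hqr : Module.finrank F ((Fin n → F) ⧸ W) = n - k := by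
        have h1 := Submodule.finrank_quotient_add_finrank W
        rw [hrankV] at h1
        omega
      rw [hqr] at hd
      obtain ⟨j, hj1, hj2, hj3⟩ := aux_primdvd F p (n - k) hp hpq hd
      exact hprim j hj1 (by omega) hj3
  · -- h acts nontrivially on W
    have hd := aux_order F p hp fW hfWp hfW1
    rw [← hkdef] at hd
    obtain ⟨j, hj1, hj2, hj3⟩ := aux_primdvd F p k hp hpq hd
    exact hprim j hj1 (by omega) hj3
end
end
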